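/- arXiv:2506.19565 — 2 statements merged into one kernel-verified Lean document; each statement's English description precedes it below -/
import Mathlib

section
/- Fix positive integers N, n, p, m_1, …, m_N and T. Consider real matrices A (n×n), B^i (n×m_i), C (p×n), D^i (p×m_i), symmetric Q^i (p×p) with Q^i ⪰ 0, symmetric R^{ij} (m_j×m_j) with R^{ii} ≻ 0, scalars δ^i ∈ (0,1], and vectors l_t^i ∈ ℝ^p for i ∈ {1,…,N}, t ∈ {1,…,T}. Consider the coupled generalized discrete Riccati difference system in the unknowns K_t^i ∈ ℝ^{m_i×n}, L_t^i ∈ ℝ^{m_i}, P_t^i ∈ ℝ^{n×n}, S_t^i ∈ ℝ^n, w_t^i ∈ ℝ (for all i and all t ∈ {1,…,T}) with terminal conditions P^i_{T+1}=0, S^i_{T+1}=0, w^i_{T+1}=0: (i) δ^i (B^i)^⊤ P^i_{t+1} F_t + (D^i)^⊤ Q^i G_t + R^{ii} K^i_t = 0; (ii) δ^i (B^i)^⊤ (P^i_{t+1} I_t + S^i_{t+1}) + R^{ii} L^i_t + (D^i)^⊤ Q^i M^i_t = 0; (iii) P^i_t = G_t^⊤ Q^i G_t + δ^i F_t^⊤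 P^i_{t+1} F_t + Σ_{j=1}^N (K^j_t)^⊤ R^{ij} K^j_t; (iv) S^i_t = G_t^⊤ Q^i M^i_t + δ^i F_t^⊤ P^i_{t+1} I_t + δ^i F_t^⊤ S^i_{t+1} + Σ_{j=1}^N (K^j_t)^⊤ R^{ij} L^j_t; (v) w^i_t = ½ (M^i_t)^⊤ Q^i M^i_t + ½ δ^i I_t^⊤ P^i_{t+1} I_t + δ^i I_t^⊤ S^i_{t+1} + δ^i w^i_{t+1} + ½ Σ_{j=1}^N (L^j_t)^⊤ R^{ij} L^j_t, where F_t = A + Σ_j B^j K^j_t, G_t = C + Σ_j D^j K^j_t, I_t = Σ_j B^j L^j_t, M_t^i = Σ_j D^j L^j_t − l_t^i. Suppose the backward sequence P_{T+1}, P_T, …, P_2 obtained by setting P^i_{T+1}=0, solving K_t = H(P_{t+1})^{−1} g(P_{t+1}) (stacked as K_t = col(K_t^1,…,K_t^N)), and updating each P^i_t by (iii), is well defined, i.e. H(P_{t+1}) is invertible at every stage t ∈ {1,…,T}. Then the system (i)–(v) with the stated terminal conditions admits exactly one solution {K_t^i, L_t^i, P_t^i, S_t^i, w_t^i : 1 ≤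 i ≤ N, 1 ≤ t ≤ T}. -/
open Matrix BigOperators

noncomputable def Hmat {N n p : ℕ} {m : Fin N → ℕ}
    (B : (i : Fin N) → Matrix (Fin n) (Fin (m i)) ℝ)
    (D : (i : Fin N) → Matrix (Fin p) (Fin (m i)) ℝ)
    (Q : Fin N → Matrix (Fin p) (Fin p) ℝ)
    (R : (i j : Fin N) → Matrix (Fin (m j)) (Fin (m j)) ℝ)
    (δ : Fin N → ℝ)
    (P : Fin N → Matrix (Fin n) (Fin n) ℝ) :
    Matrix ((i : Fin N) × Fin (m i)) ((i : Fin N) × Fin (m i)) ℝ :=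
  (Matrix.of fun a b =>
    ((D a.1)ᵀ * Q a.1 * D b.1) a.2 b.2 + δ a.1 * ((B a.1)ᵀ * P a.1 * B b.1) a.2 b.2)
  + Matrix.blockDiagonal' (fun i => R i i)

noncomputable def gmat {N n p : ℕ} {m : Fin N → ℕ}
    (A : Matrix (Fin n) (Fin n) ℝ)
    (B : (i : Fin N) → Matrix (Fin n) (Fin (m i)) ℝ)
    (C : Matrix (Fin p) (Fin n) ℝ)
    (D : (i : Fin N) → Matrix (Fin p) (Fin (m i)) ℝ)
    (Q : Fin N → Matrix (Fin p) (Fin p) ℝ)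
    (δ : Fin N → ℝ)
    (P : Fin N → Matrix (Fin n) (Fin n) ℝ) :
    Matrix ((i : Fin N) × Fin (m i)) (Fin n) ℝ :=
  Matrix.of fun a c =>
    (-((D a.1)ᵀ * Q a.1 * C) - δ a.1 • ((B a.1)ᵀ * P a.1 * A)) a.2 c

noncomputable def Kiter {N n p : ℕ} {m : Fin N → ℕ}
    (A : Matrix (Fin n) (Fin n) ℝ)
    (B : (i : Fin N) → Matrix (Fin n) (Fin (m i)) ℝ)
    (C : Matrix (Fin p) (Fin n) ℝ)
    (D : (i : Fin N) → Matrix (Fin p) (Fin (m i)) ℝ)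
    (Q : Fin N → Matrix (Fin p) (Fin p) ℝ)
    (R : (i j : Fin N) → Matrix (Fin (m j)) (Fin (m j)) ℝ)
    (δ : Fin N → ℝ)
    (P : Fin N → Matrix (Fin n) (Fin n) ℝ) :
    (j : Fin N) → Matrix (Fin (m j)) (Fin n) ℝ :=
  fun j => Matrix.of fun a c =>
    ((Hmat B D Q R δ P)⁻¹ * gmat A B C D Q δ P) ⟨j, a⟩ c


noncomputable def Lvec {N n p : ℕ} {m : Fin N → ℕ}
    (B : (i : Fin N) → Matrix (Fin n) (Fin (m i)) ℝ)
    (D : (i : Fin N) → Matrix (Fin p) (Fin (m i)) ℝ)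
    (Q : Fin N → Matrix (Fin p) (Fin p) ℝ)
    (R : (i j : Fin N) → Matrix (Fin (m j)) (Fin (m j)) ℝ)
    (δ : Fin N → ℝ)
    (P : Fin N → Matrix (Fin n) (Fin n) ℝ)
    (S : Fin N → Fin n → ℝ) (lt : Fin N → Fin p → ℝ) :
    ((i : Fin N) × Fin (m i)) → ℝ :=
  (Hmat B D Q R δ P)⁻¹.mulVec
    (fun x => (-(δ x.1 • ((B x.1)ᵀ.mulVec (S x.1)))
      + ((D x.1)ᵀ * Q x.1).mulVec (lt x.1)) x.2)

variable {N n p : ℕ} {m : Fin N → ℕ}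
    (A : Matrix (Fin n) (Fin n) ℝ)
    (B : (i : Fin N) → Matrix (Fin n) (Fin (m i)) ℝ)
    (C : Matrix (Fin p) (Fin n) ℝ)
    (D : (i : Fin N) → Matrix (Fin p) (Fin (m i)) ℝ)
    (Q : Fin N → Matrix (Fin p) (Fin p) ℝ)
    (R : (i j : Fin N) → Matrix (Fin (m j)) (Fin (m j)) ℝ)
    (δ : Fin N → ℝ)
    (P : Fin N → Matrix (Fin n) (Fin n) ℝ)

def stackM (K : (j : Fin N) → Matrix (Fin (m j)) (Fin n) ℝ) :
    Matrix ((i : Fin N) × Fin (m i)) (Fin n) ℝ :=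
  Matrix.of fun a c => K a.1 a.2 c

lemma Hmul_stack (K : (j : Fin N) → Matrix (Fin (m j)) (Fin n) ℝ) (i : Fin N)
    (a : Fin (m i)) (c : Fin n) :
    (Hmat B D Q R δ P * stackM K) ⟨i, a⟩ c
      = (δ i • ((B i)ᵀ * P i * ∑ j, B j * K j)
          + (D i)ᵀ * Q i * (∑ j, D j * K j) + R i i * K i) a c := by
  rw [Matrix.mul_apply]
  rw [← Finset.univ_sigma_univ, Finset.sum_sigma]
  have key : ∀ j : Fin N, ∑ b : Fin (m j),
      Hmat B D Q R δ P ⟨i, a⟩ ⟨j, b⟩ * stackM K ⟨j, b⟩ c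
      = ((D i)ᵀ * Q i * (D j * K j)) a c + δ i * ((B i)ᵀ * P i * (B j * K j)) a c
        + (if j = i then (R i i * K i) a c else 0) := by
    intro j
    have e1 : ((D i)ᵀ * Q i * (D j * K j)) a c = ∑ b, ((D i)ᵀ * Q i * D j) a b * K j b c := by
      rw [← Matrix.mul_assoc, Matrix.mul_apply]
    have e2 : ((B i)ᵀ * P i * (B j * K j)) a c = ∑ b, ((B i)ᵀ * P i * B j) a b * K j b c := by
      rw [← Matrix.mul_assoc, Matrix.mul_apply]
    rcases eq_or_ne j i with h | h
    · subst h
      have e3 : (R j j * K j) a c = ∑ b, R j j a b * K j b c := Matrix.mul_apply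
      simp only [Hmat, Matrix.add_apply, Matrix.of_apply, stackM,
        Matrix.blockDiagonal'_apply_eq, eq_self_iff_true, if_true, e1, e2, e3, Finset.mul_sum]
      rw [← Finset.sum_add_distrib, ← Finset.sum_add_distrib]
      exact Finset.sum_congr rfl fun b _ => by ring
    · simp only [Hmat, Matrix.add_apply, Matrix.of_apply, stackM,
        Matrix.blockDiagonal'_apply_ne _ _ _ (Ne.symm h), if_neg h, add_zero, e1, e2,
        Finset.mul_sum]
      rw [← Finset.sum_add_distrib]
      exact Finset.sum_congr rfl fun b _ => by ring
  rw [Finset.sum_congr rfl fun j _ => key j]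
  simp only [Finset.sum_add_distrib, Finset.sum_ite_eq', Finset.mem_univ, if_pos]
  simp only [Matrix.add_apply, Matrix.smul_apply, smul_eq_mul, Matrix.mul_sum,
    Matrix.sum_apply, Finset.mul_sum]
  ring

lemma mulVec_sum' {ι α β : Type*} [Fintype ι] [Fintype β]
    (M : Matrix α β ℝ) (u : ι → β → ℝ) :
    M.mulVec (∑ j, u j) = ∑ j, M.mulVec (u j) :=
  map_sum M.mulVecLin u Finset.univ

lemma HmulVec_stack (L : (j : Fin N) → Fin (m j) → ℝ) (i : Fin N) (a : Fin (m i)) :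
    (Hmat B D Q R δ P).mulVec (fun x => L x.1 x.2) ⟨i, a⟩
      = (δ i • ((B i)ᵀ.mulVec ((P i).mulVec (∑ j, (B j).mulVec (L j))))
          + ((D i)ᵀ * Q i).mulVec (∑ j, (D j).mulVec (L j))
          + (R i i).mulVec (L i)) a := by
  rw [Matrix.mulVec, dotProduct]
  rw [← Finset.univ_sigma_univ, Finset.sum_sigma]
  have key : ∀ j : Fin N, ∑ b : Fin (m j),
      Hmat B D Q R δ P ⟨i, a⟩ ⟨j, b⟩ * L j b
      = (((D i)ᵀ * Q i).mulVec ((D j).mulVec (L j))) a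
        + δ i * ((B i)ᵀ.mulVec ((P i).mulVec ((B j).mulVec (L j)))) a
        + (if j = i then ((R i i).mulVec (L i)) a else 0) := by
    intro j
    have e1 : (((D i)ᵀ * Q i).mulVec ((D j).mulVec (L j))) a
        = ∑ b, ((D i)ᵀ * Q i * D j) a b * L j b := by
      rw [Matrix.mulVec_mulVec, Matrix.mulVec, dotProduct]
    have e2 : ((B i)ᵀ.mulVec ((P i).mulVec ((B j).mulVec (L j)))) a
        = ∑ b, ((B i)ᵀ * P i * B j) a b * L j b := by
      rw [Matrix.mulVec_mulVec, Matrix.mulVec_mulVec, Matrix.mulVec, dotProduct]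
    rcases eq_or_ne j i with h | h
    · subst h
      have e3 : ((R j j).mulVec (L j)) a = ∑ b, R j j a b * L j b := by
        rw [Matrix.mulVec, dotProduct]
      simp only [Hmat, Matrix.add_apply, Matrix.of_apply,
        Matrix.blockDiagonal'_apply_eq, eq_self_iff_true, if_true, e1, e2, e3,
        Finset.mul_sum]
      rw [← Finset.sum_add_distrib, ← Finset.sum_add_distrib]
      exact Finset.sum_congr rfl fun b _ => by ring
    · simp only [Hmat, Matrix.add_apply, Matrix.of_apply,
        Matrix.blockDiagonal'_apply_ne _ _ _ (Ne.symm h), if_neg h, add_zero, e1, e2,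
        Finset.mul_sum]
      rw [← Finset.sum_add_distrib]
      exact Finset.sum_congr rfl fun b _ => by ring
  rw [Finset.sum_congr rfl fun j _ => key j]
  simp only [Finset.sum_add_distrib, Finset.sum_ite_eq', Finset.mem_univ, if_pos]
  simp only [Pi.add_apply, Pi.smul_apply, smul_eq_mul, mulVec_sum',
    Finset.sum_apply, Finset.mul_sum]
  ring

lemma keyK (hH : IsUnit (Hmat B D Q R δ P).det)
    (K : (j : Fin N) → Matrix (Fin (m j)) (Fin n) ℝ) :
    (∀ i, δ i • ((B i)ᵀ * P i * (A + ∑ j, B j * K j))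
        + (D i)ᵀ * Q i * (C + ∑ j, D j * K j) + R i i * K i = 0)
    ↔ K = Kiter A B C D Q R δ P := by
  have expand : ∀ i, δ i • ((B i)ᵀ * P i * (A + ∑ j, B j * K j))
      + (D i)ᵀ * Q i * (C + ∑ j, D j * K j) + R i i * K i
      = (δ i • ((B i)ᵀ * P i * ∑ j, B j * K j)
          + (D i)ᵀ * Q i * (∑ j, D j * K j) + R i i * K i)
        + (δ i • ((B i)ᵀ * P i * A) + (D i)ᵀ * Q i * C) := by
    intro i
    rw [Matrix.mul_add, Matrix.mul_add, smul_add]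
    abel
  have stacked : (∀ i, δ i • ((B i)ᵀ * P i * (A + ∑ j, B j * K j))
      + (D i)ᵀ * Q i * (C + ∑ j, D j * K j) + R i i * K i = 0)
      ↔ Hmat B D Q R δ P * stackM K = gmat A B C D Q δ P := by
    constructor
    · intro h
      apply Matrix.ext
      intro x c
      obtain ⟨i, a⟩ := x
      rw [Hmul_stack]
      have h2 : (δ i • ((B i)ᵀ * P i * ∑ j, B j * K j)
          + (D i)ᵀ * Q i * (∑ j, D j * K j) + R i i * K i)
          = -(δ i • ((B i)ᵀ * P i * A) + (D i)ᵀ * Q i * C) := by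
        have := h i
        rw [expand i] at this
        exact eq_neg_of_add_eq_zero_left this
      rw [h2]
      simp only [gmat, Matrix.of_apply, Matrix.neg_apply, Matrix.add_apply,
        Matrix.sub_apply, Matrix.smul_apply, smul_eq_mul]
      ring
    · intro h i
      rw [expand i]
      have h2 : ∀ a c, (δ i • ((B i)ᵀ * P i * ∑ j, B j * K j)
          + (D i)ᵀ * Q i * (∑ j, D j * K j) + R i i * K i) a c
          = gmat A B C D Q δ P ⟨i, a⟩ c := by
        intro a c
        rw [← Hmul_stack, h]
      apply Matrix.ext
      intro a c
      have := h2 a c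
      simp only [gmat, Matrix.of_apply, Matrix.sub_apply, Matrix.neg_apply,
        Matrix.smul_apply, smul_eq_mul] at this
      simp only [Matrix.add_apply, Matrix.smul_apply, Matrix.zero_apply, smul_eq_mul]
      simp only [Matrix.add_apply, Matrix.smul_apply, smul_eq_mul] at this
      linarith
  rw [stacked]
  constructor
  · intro h
    have hs : stackM K = (Hmat B D Q R δ P)⁻¹ * gmat A B C D Q δ P := by
      rw [← h, Matrix.nonsing_inv_mul_cancel_left _ _ hH]
    funext j
    apply Matrix.ext
    intro a c
    have := congrFun (congrFun hs ⟨j, a⟩) c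
    exact this
  · intro h
    subst h
    have : stackM (Kiter A B C D Q R δ P)
        = (Hmat B D Q R δ P)⁻¹ * gmat A B C D Q δ P := rfl
    rw [this, Matrix.mul_nonsing_inv_cancel_left _ _ hH]

lemma keyL (hH : IsUnit (Hmat B D Q R δ P).det)
    (S : Fin N → Fin n → ℝ) (lt : Fin N → Fin p → ℝ)
    (L : (j : Fin N) → Fin (m j) → ℝ) :
    (∀ i, δ i • ((B i)ᵀ.mulVec ((P i).mulVec (∑ j, (B j).mulVec (L j)) + S i))
        + (R i i).mulVec (L i)
        + ((D i)ᵀ * Q i).mulVec ((∑ j, (D j).mulVec (L j)) - lt i) = 0)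
    ↔ L = fun j a => Lvec B D Q R δ P S lt ⟨j, a⟩ := by
  have expand : ∀ i, δ i • ((B i)ᵀ.mulVec ((P i).mulVec (∑ j, (B j).mulVec (L j)) + S i))
      + (R i i).mulVec (L i)
      + ((D i)ᵀ * Q i).mulVec ((∑ j, (D j).mulVec (L j)) - lt i)
      = (δ i • ((B i)ᵀ.mulVec ((P i).mulVec (∑ j, (B j).mulVec (L j))))
          + ((D i)ᵀ * Q i).mulVec (∑ j, (D j).mulVec (L j))
          + (R i i).mulVec (L i))
        + (δ i • ((B i)ᵀ.mulVec (S i)) - ((D i)ᵀ * Q i).mulVec (lt i)) := by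
    intro i
    rw [Matrix.mulVec_add, Matrix.mulVec_sub, smul_add]
    abel
  have stacked : (∀ i, δ i • ((B i)ᵀ.mulVec ((P i).mulVec (∑ j, (B j).mulVec (L j)) + S i))
      + (R i i).mulVec (L i)
      + ((D i)ᵀ * Q i).mulVec ((∑ j, (D j).mulVec (L j)) - lt i) = 0)
      ↔ (Hmat B D Q R δ P).mulVec (fun x => L x.1 x.2)
        = (fun x => (-(δ x.1 • ((B x.1)ᵀ.mulVec (S x.1)))
            + ((D x.1)ᵀ * Q x.1).mulVec (lt x.1)) x.2) := by
    constructor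
    · intro h
      funext x
      obtain ⟨i, a⟩ := x
      rw [HmulVec_stack]
      have h2 : (δ i • ((B i)ᵀ.mulVec ((P i).mulVec (∑ j, (B j).mulVec (L j))))
          + ((D i)ᵀ * Q i).mulVec (∑ j, (D j).mulVec (L j))
          + (R i i).mulVec (L i))
          = -(δ i • ((B i)ᵀ.mulVec (S i)) - ((D i)ᵀ * Q i).mulVec (lt i)) := by
        have := h i
        rw [expand i] at this
        exact eq_neg_of_add_eq_zero_left this
      rw [h2]
      simp only [Pi.neg_apply, Pi.sub_apply, Pi.add_apply, Pi.smul_apply, smul_eq_mul]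
      ring
    · intro h i
      rw [expand i]
      have h2 : ∀ a, (δ i • ((B i)ᵀ.mulVec ((P i).mulVec (∑ j, (B j).mulVec (L j))))
          + ((D i)ᵀ * Q i).mulVec (∑ j, (D j).mulVec (L j))
          + (R i i).mulVec (L i)) a
          = (-(δ i • ((B i)ᵀ.mulVec (S i))) + ((D i)ᵀ * Q i).mulVec (lt i)) a := by
        intro a
        rw [← HmulVec_stack, h]
      funext a
      have := h2 a
      simp only [Pi.add_apply, Pi.smul_apply, Pi.neg_apply, Pi.sub_apply,
        Pi.zero_apply, smul_eq_mul] at this ⊢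
      linarith
  rw [stacked]
  constructor
  · intro h
    have hs : (fun x : (i : Fin N) × Fin (m i) => L x.1 x.2)
        = Lvec B D Q R δ P S lt := by
      rw [Lvec, ← h, Matrix.mulVec_mulVec, Matrix.nonsing_inv_mul _ hH, Matrix.one_mulVec]
    funext j a
    exact congrFun hs ⟨j, a⟩
  · intro h
    subst h
    have : (fun x : (i : Fin N) × Fin (m i) =>
        (fun (j : Fin N) (a : Fin (m j)) => Lvec B D Q R δ P S lt ⟨j, a⟩) x.1 x.2)
        = Lvec B D Q R δ P S lt := rfl
    rw [this, Lvec, Matrix.mulVec_mulVec, Matrix.mul_nonsing_inv _ hH, Matrix.one_mulVec]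

noncomputable def Pback {N n p : ℕ} {m : Fin N → ℕ}
    (A : Matrix (Fin n) (Fin n) ℝ)
    (B : (i : Fin N) → Matrix (Fin n) (Fin (m i)) ℝ)
    (C : Matrix (Fin p) (Fin n) ℝ)
    (D : (i : Fin N) → Matrix (Fin p) (Fin (m i)) ℝ)
    (Q : Fin N → Matrix (Fin p) (Fin p) ℝ)
    (R : (i j : Fin N) → Matrix (Fin (m j)) (Fin (m j)) ℝ)
    (δ : Fin N → ℝ) :
    ℕ → Fin N → Matrix (Fin n) (Fin n) ℝ
  | 0 => fun _ => 0
  | s + 1 =>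
    let Pp := Pback A B C D Q R δ s
    let K := Kiter A B C D Q R δ Pp
    let F := A + ∑ j, B j * K j
    let G := C + ∑ j, D j * K j
    fun i => Gᵀ * Q i * G + δ i • (Fᵀ * Pp i * F) + ∑ j, (K j)ᵀ * R i j * K j


noncomputable def SWrec {N n p : ℕ} {m : Fin N → ℕ}
    (A : Matrix (Fin n) (Fin n) ℝ)
    (B : (i : Fin N) → Matrix (Fin n) (Fin (m i)) ℝ)
    (C : Matrix (Fin p) (Fin n) ℝ)
    (D : (i : Fin N) → Matrix (Fin p) (Fin (m i)) ℝ)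
    (Q : Fin N → Matrix (Fin p) (Fin p) ℝ)
    (R : (i j : Fin N) → Matrix (Fin (m j)) (Fin (m j)) ℝ)
    (δ : Fin N → ℝ)
    (lt : ℕ → Fin N → Fin p → ℝ) :
    ℕ → (Fin N → Fin n → ℝ) × (Fin N → ℝ)
  | 0 => (0, 0)
  | s + 1 =>
    let Pp := Pback A B C D Q R δ s
    let prev := SWrec A B C D Q R δ lt s
    let K := Kiter A B C D Q R δ Pp
    let L : (j : Fin N) → Fin (m j) → ℝ :=
      fun j a => Lvec B D Q R δ Pp prev.1 (lt s) ⟨j, a⟩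
    (fun i => ((C + ∑ j, D j * K j)ᵀ * Q i).mulVec
          ((∑ j, (D j).mulVec (L j)) - lt s i)
        + δ i • (((A + ∑ j, B j * K j)ᵀ * Pp i).mulVec (∑ j, (B j).mulVec (L j)))
        + δ i • ((A + ∑ j, B j * K j)ᵀ.mulVec (prev.1 i))
        + ∑ j, ((K j)ᵀ * R i j).mulVec (L j),
     fun i => (1 / 2) * (((∑ j, (D j).mulVec (L j)) - lt s i) ⬝ᵥ
          (Q i).mulVec ((∑ j, (D j).mulVec (L j)) - lt s i))
        + δ i * ((1 / 2) * ((∑ j, (B j).mulVec (L j)) ⬝ᵥ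
            (Pp i).mulVec (∑ j, (B j).mulVec (L j))))
        + δ i * ((∑ j, (B j).mulVec (L j)) ⬝ᵥ prev.1 i)
        + δ i * prev.2 i
        + (1 / 2) * ∑ j, (L j ⬝ᵥ (R i j).mulVec (L j)))

noncomputable def ltN {N p : ℕ} (T : ℕ) (l : Fin N → Fin T → Fin p → ℝ) :
    ℕ → Fin N → Fin p → ℝ :=
  fun s i => if h : T - 1 - s < T then l i ⟨T - 1 - s, h⟩ else 0

lemma ltN_eq {N p T : ℕ} (l : Fin N → Fin T → Fin p → ℝ) (t : Fin T) (i : Fin N) :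
    ltN T l (T - 1 - ↑t) i = l i t := by
  have ht := t.isLt
  have h : T - 1 - (T - 1 - ↑t) < T := by omega
  rw [ltN]
  rw [dif_pos h]
  have hv : T - 1 - (T - 1 - (t : ℕ)) = (t : ℕ) := by omega
  have : (⟨T - 1 - (T - 1 - ↑t), h⟩ : Fin T) = t := Fin.ext hv
  rw [this]

/-- Proposition 1: if the backward sequence `P_{T+1}, …, P_2` is well defined,
i.e. `H(P_{t+1})` is invertible at every stage, then the coupled generalized discrete Riccati
difference system (i)–(v) with terminal conditions `P_{T+1}=0, S_{T+1}=0, w_{T+1}=0`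
admits exactly one solution `{K_tⁱ, L_tⁱ, P_tⁱ, S_tⁱ, w_tⁱ}`.
(Stage `t ∈ {1,…,T}` is encoded by `t : Fin T`; the matrices `P, S, w` are indexed by
`Fin (T+1)` with `t.castSucc` playing the role of `t` and `t.succ` that of `t+1`.) -/
theorem stmt0 {N n p T : ℕ} {m : Fin N → ℕ}
    (hN : 0 < N) (hn : 0 < n) (hp : 0 < p) (hm : ∀ i, 0 < m i) (hT : 0 < T)
    (A : Matrix (Fin n) (Fin n) ℝ)
    (B : (i : Fin N) → Matrix (Fin n) (Fin (m i)) ℝ)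
    (C : Matrix (Fin p) (Fin n) ℝ)
    (D : (i : Fin N) → Matrix (Fin p) (Fin (m i)) ℝ)
    (Q : Fin N → Matrix (Fin p) (Fin p) ℝ)
    (R : (i j : Fin N) → Matrix (Fin (m j)) (Fin (m j)) ℝ)
    (δ : Fin N → ℝ)
    (l : Fin N → Fin T → Fin p → ℝ)
    (hQ : ∀ i, (Q i).PosSemidef)
    (hR : ∀ i j, (R i j).IsSymm)
    (hRii : ∀ i, (R i i).PosDef)
    (hδ : ∀ i, 0 < δ i ∧ δ i ≤ 1)
    (hInv : ∀ s < T, IsUnit (Hmat B D Q R δ (Pback A B C D Q R δ s)).det) :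
    ∃! sol : ((i : Fin N) → Fin T → Matrix (Fin (m i)) (Fin n) ℝ) ×
             ((i : Fin N) → Fin T → (Fin (m i) → ℝ)) ×
             (Fin N → Fin (T + 1) → Matrix (Fin n) (Fin n) ℝ) ×
             (Fin N → Fin (T + 1) → (Fin n → ℝ)) ×
             (Fin N → Fin (T + 1) → ℝ),
      -- terminal conditions P_{T+1} = 0, S_{T+1} = 0, w_{T+1} = 0
      (∀ i, sol.2.2.1 i (Fin.last T) = 0) ∧
      (∀ i, sol.2.2.2.1 i (Fin.last T) = 0) ∧
      (∀ i, sol.2.2.2.2 i (Fin.last T) = 0) ∧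
      -- (i)  δⁱ (Bⁱ)ᵀ P_{t+1}ⁱ F_t + (Dⁱ)ᵀ Qⁱ G_t + Rⁱⁱ K_tⁱ = 0
      (∀ (i : Fin N) (t : Fin T),
        δ i • ((B i)ᵀ * sol.2.2.1 i t.succ * (A + ∑ j, B j * sol.1 j t))
          + (D i)ᵀ * Q i * (C + ∑ j, D j * sol.1 j t)
          + R i i * sol.1 i t = 0) ∧
      -- (ii)  δⁱ (Bⁱ)ᵀ (P_{t+1}ⁱ I_t + S_{t+1}ⁱ) + Rⁱⁱ L_tⁱ + (Dⁱ)ᵀ Qⁱ M_tⁱ = 0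
      (∀ (i : Fin N) (t : Fin T),
        δ i • ((B i)ᵀ.mulVec ((sol.2.2.1 i t.succ).mulVec (∑ j, (B j).mulVec (sol.2.1 j t))
            + sol.2.2.2.1 i t.succ))
          + (R i i).mulVec (sol.2.1 i t)
          + ((D i)ᵀ * Q i).mulVec ((∑ j, (D j).mulVec (sol.2.1 j t)) - l i t) = 0) ∧
      -- (iii)  P_tⁱ = G_tᵀ Qⁱ G_t + δⁱ F_tᵀ P_{t+1}ⁱ F_t + Σⱼ (K_tʲ)ᵀ Rⁱʲ K_tʲ
      (∀ (i : Fin N) (t : Fin T),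
        sol.2.2.1 i t.castSucc =
          (C + ∑ j, D j * sol.1 j t)ᵀ * Q i * (C + ∑ j, D j * sol.1 j t)
          + δ i • ((A + ∑ j, B j * sol.1 j t)ᵀ * sol.2.2.1 i t.succ
              * (A + ∑ j, B j * sol.1 j t))
          + ∑ j, (sol.1 j t)ᵀ * R i j * sol.1 j t) ∧
      -- (iv)  S_tⁱ = G_tᵀ Qⁱ M_tⁱ + δⁱ F_tᵀ P_{t+1}ⁱ I_t + δⁱ F_tᵀ S_{t+1}ⁱ + Σⱼ (K_tʲ)ᵀ Rⁱʲ L_tʲ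
      (∀ (i : Fin N) (t : Fin T),
        sol.2.2.2.1 i t.castSucc =
          ((C + ∑ j, D j * sol.1 j t)ᵀ * Q i).mulVec
            ((∑ j, (D j).mulVec (sol.2.1 j t)) - l i t)
          + δ i • (((A + ∑ j, B j * sol.1 j t)ᵀ * sol.2.2.1 i t.succ).mulVec
              (∑ j, (B j).mulVec (sol.2.1 j t)))
          + δ i • ((A + ∑ j, B j * sol.1 j t)ᵀ.mulVec (sol.2.2.2.1 i t.succ))
          + ∑ j, ((sol.1 j t)ᵀ * R i j).mulVec (sol.2.1 j t)) ∧
      -- (v)  w_tⁱ = ½ M_tⁱᵀ Qⁱ M_tⁱ + ½ δⁱ I_tᵀ P_{t+1}ⁱ I_t + δⁱ I_tᵀ S_{t+1}ⁱ + δⁱ w_{t+1}ⁱ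
      --       + ½ Σⱼ (L_tʲ)ᵀ Rⁱʲ L_tʲ
      (∀ (i : Fin N) (t : Fin T),
        sol.2.2.2.2 i t.castSucc =
          (1 / 2) * (((∑ j, (D j).mulVec (sol.2.1 j t)) - l i t) ⬝ᵥ
              (Q i).mulVec ((∑ j, (D j).mulVec (sol.2.1 j t)) - l i t))
          + δ i * ((1 / 2) * ((∑ j, (B j).mulVec (sol.2.1 j t)) ⬝ᵥ
              (sol.2.2.1 i t.succ).mulVec (∑ j, (B j).mulVec (sol.2.1 j t))))
          + δ i * ((∑ j, (B j).mulVec (sol.2.1 j t)) ⬝ᵥ sol.2.2.2.1 i t.succ)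
          + δ i * sol.2.2.2.2 i t.succ
          + (1 / 2) * ∑ j, (sol.2.1 j t ⬝ᵥ (R i j).mulVec (sol.2.1 j t))) := by
  refine ⟨⟨fun i t => Kiter A B C D Q R δ (Pback A B C D Q R δ (T - 1 - ↑t)) i,
          fun i t a => Lvec B D Q R δ (Pback A B C D Q R δ (T - 1 - ↑t))
              ((SWrec A B C D Q R δ (ltN T l) (T - 1 - ↑t)).1)
              (ltN T l (T - 1 - ↑t)) ⟨i, a⟩,
          fun i u => Pback A B C D Q R δ (T - ↑u) i,
          fun i u => (SWrec A B C D Q R δ (ltN T l) (T - ↑u)).1 i,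
          fun i u => (SWrec A B C D Q R δ (ltN T l) (T - ↑u)).2 i⟩,
        ⟨?_, ?_, ?_, ?_, ?_, ?_, ?_, ?_⟩, ?_⟩
  · intro i
    simp [Fin.val_last, Nat.sub_self, Pback]
  · intro i
    simp [Fin.val_last, Nat.sub_self, SWrec]
  · intro i
    simp [Fin.val_last, Nat.sub_self, SWrec]
  · intro i t
    have ht := t.isLt
    have e2 : T - ((t.succ : Fin (T + 1)) : ℕ) = T - 1 - (t : ℕ) := by
      rw [Fin.val_succ]; omega
    dsimp only
    rw [e2]
    exact (keyK A B C D Q R δ _ (hInv _ (by omega)) _).mpr rfl i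
  · intro i t
    have ht := t.isLt
    have e2 : T - ((t.succ : Fin (T + 1)) : ℕ) = T - 1 - (t : ℕ) := by
      rw [Fin.val_succ]; omega
    dsimp only
    rw [e2, ← ltN_eq l t i]
    exact (keyL B D Q R δ _ (hInv _ (by omega)) _ _ _).mpr rfl i
  · intro i t
    have ht := t.isLt
    have e2 : T - ((t.succ : Fin (T + 1)) : ℕ) = T - 1 - (t : ℕ) := by
      rw [Fin.val_succ]; omega
    have e3 : T - ((t.castSucc : Fin (T + 1)) : ℕ) = (T - 1 - (t : ℕ)) + 1 := by
      rw [Fin.coe_castSucc]; omega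
    dsimp only
    rw [e2, e3]
    rfl
  · intro i t
    have ht := t.isLt
    have e2 : T - ((t.succ : Fin (T + 1)) : ℕ) = T - 1 - (t : ℕ) := by
      rw [Fin.val_succ]; omega
    have e3 : T - ((t.castSucc : Fin (T + 1)) : ℕ) = (T - 1 - (t : ℕ)) + 1 := by
      rw [Fin.coe_castSucc]; omega
    dsimp only
    rw [e2, e3, ← ltN_eq l t i]
    rfl
  · intro i t
    have ht := t.isLt
    have e2 : T - ((t.succ : Fin (T + 1)) : ℕ) = T - 1 - (t : ℕ) := by
      rw [Fin.val_succ]; omega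
    have e3 : T - ((t.castSucc : Fin (T + 1)) : ℕ) = (T - 1 - (t : ℕ)) + 1 := by
      rw [Fin.coe_castSucc]; omega
    dsimp only
    rw [e2, e3, ← ltN_eq l t i]
    rfl
  · rintro ⟨K', L', P', S', w'⟩ ⟨hP0, hS0, hw0, hi, hii, hiii, hiv, hv⟩
    dsimp only at hP0 hS0 hw0 hi hii hiii hiv hv
    have main : ∀ s : ℕ, s ≤ T →
        (∀ i, P' i ⟨T - s, by omega⟩ = Pback A B C D Q R δ s i) ∧
        (∀ i, S' i ⟨T - s, by omega⟩ = (SWrec A B C D Q R δ (ltN T l) s).1 i) ∧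
        (∀ i, w' i ⟨T - s, by omega⟩ = (SWrec A B C D Q R δ (ltN T l) s).2 i) := by
      intro s
      induction s with
      | zero =>
        intro _
        have hlast : (⟨T - 0, by omega⟩ : Fin (T + 1)) = Fin.last T :=
          Fin.ext (show T - 0 = T by omega)
        rw [hlast]
        refine ⟨fun i => ?_, fun i => ?_, fun i => ?_⟩
        · rw [hP0 i]; simp [Pback]
        · rw [hS0 i]; simp [SWrec]
        · rw [hw0 i]; simp [SWrec]
      | succ s ih =>
        intro hs1
        obtain ⟨ihP, ihS, ihw⟩ := ih (by omega)
        obtain ⟨t, ht1, ht2⟩ : ∃ t : Fin T, t.succ = ⟨T - s, by omega⟩ ∧ (t : ℕ) = T - s - 1 :=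
          ⟨⟨T - s - 1, by omega⟩, Fin.ext (show T - s - 1 + 1 = T - s by omega), rfl⟩
        have ht3 : t.castSucc = ⟨T - (s + 1), by omega⟩ :=
          Fin.ext (show (t : ℕ) = T - (s + 1) by omega)
        have hH := hInv s (by omega)
        have hsx : T - 1 - (t : ℕ) = s := by omega
        have hl : ∀ i, ltN T l s i = l i t := by
          intro i
          rw [← hsx]
          exact ltN_eq l t i
        have hK : ∀ j, K' j t = Kiter A B C D Q R δ (Pback A B C D Q R δ s) j := by
          have hKt : (fun j => K' j t) = Kiter A B C D Q R δ (Pback A B C D Q R δ s) := by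
            apply (keyK A B C D Q R δ _ hH _).mp
            intro i
            have h1 := hi i t
            rw [ht1, ihP i] at h1
            exact h1
          exact fun j => congrFun hKt j
        have hL : ∀ j, L' j t = fun a => Lvec B D Q R δ (Pback A B C D Q R δ s)
            ((SWrec A B C D Q R δ (ltN T l) s).1) (ltN T l s) ⟨j, a⟩ := by
          have hLt := (keyL B D Q R δ (Pback A B C D Q R δ s) hH
              ((SWrec A B C D Q R δ (ltN T l) s).1) (ltN T l s) (fun j => L' j t)).mp ?_
          · exact fun j => congrFun hLt j
          · intro i
            have h1 := hii i t
            rw [ht1, ihP i, ihS i, ← hl i] at h1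
            exact h1
        refine ⟨fun i => ?_, fun i => ?_, fun i => ?_⟩
        · rw [← ht3, hiii i t, ht1, ihP i]
          simp only [hK]
          rfl
        · rw [← ht3, hiv i t, ht1, ihP i, ihS i, ← hl i]
          simp only [hK, hL]
          rfl
        · rw [← ht3, hv i t, ht1, ihP i, ihS i, ihw i, ← hl i]
          simp only [hK, hL]
          rfl
    have hPall : ∀ i u, P' i u = Pback A B C D Q R δ (T - ↑u) i := by
      intro i u
      have hu : (⟨T - (T - ↑u), by omega⟩ : Fin (T + 1)) = u :=
        Fin.ext (show T - (T - ↑u) = ↑u by have := u.isLt; omega)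
      have := (main (T - ↑u) (by omega)).1 i
      rwa [hu] at this
    have hSall : ∀ i u, S' i u = (SWrec A B C D Q R δ (ltN T l) (T - ↑u)).1 i := by
      intro i u
      have hu : (⟨T - (T - ↑u), by omega⟩ : Fin (T + 1)) = u :=
        Fin.ext (show T - (T - ↑u) = ↑u by have := u.isLt; omega)
      have := (main (T - ↑u) (by omega)).2.1 i
      rwa [hu] at this
    have hwall : ∀ i u, w' i u = (SWrec A B C D Q R δ (ltN T l) (T - ↑u)).2 i := by
      intro i u
      have hu : (⟨T - (T - ↑u), by omega⟩ : Fin (T + 1)) = u :=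
        Fin.ext (show T - (T - ↑u) = ↑u by have := u.isLt; omega)
      have := (main (T - ↑u) (by omega)).2.2 i
      rwa [hu] at this
    have hsucc : ∀ t : Fin T, ((t.succ : Fin (T + 1)) : ℕ) = (t : ℕ) + 1 :=
      fun t => Fin.val_succ t
    have hPsucc : ∀ (i : Fin N) (t : Fin T),
        P' i t.succ = Pback A B C D Q R δ (T - 1 - ↑t) i := by
      intro i t
      rw [hPall i t.succ, hsucc t, show T - (↑t + 1) = T - 1 - ↑t by omega]
    have hSsucc : ∀ (i : Fin N) (t : Fin T),
        S' i t.succ = (SWrec A B C D Q R δ (ltN T l) (T - 1 - ↑t)).1 i := by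
      intro i t
      rw [hSall i t.succ, hsucc t, show T - (↑t + 1) = T - 1 - ↑t by omega]
    have hKall : ∀ (t : Fin T), (fun j => K' j t)
        = Kiter A B C D Q R δ (Pback A B C D Q R δ (T - 1 - ↑t)) := by
      intro t
      have ht := t.isLt
      apply (keyK A B C D Q R δ _ (hInv _ (by omega)) _).mp
      intro i
      have h1 := hi i t
      rw [hPsucc i t] at h1
      exact h1
    have hLall : ∀ (t : Fin T), (fun j => L' j t)
        = fun j a => Lvec B D Q R δ (Pback A B C D Q R δ (T - 1 - ↑t))
            ((SWrec A B C D Q R δ (ltN T l) (T - 1 - ↑t)).1) (ltN T l (T - 1 - ↑t)) ⟨j, a⟩ := by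
      intro t
      have ht := t.isLt
      apply (keyL B D Q R δ _ (hInv _ (by omega)) _ _ _).mp
      intro i
      have h1 := hii i t
      rw [hPsucc i t, hSsucc i t, ← ltN_eq l t i] at h1
      exact h1
    simp only [Prod.mk.injEq]
    refine ⟨?_, ?_, ?_, ?_, ?_⟩
    · funext i t
      exact congrFun (hKall t) i
    · funext i t
      exact congrFun (hLall t) i
    · funext i u
      exact hPall i u
    · funext i u
      exact hSall i u
    · funext i u
      exact hwall i u
end

section
/- Let n, p ≥ 1, F, F̃ ∈ ℝ^{n×n}, G, G̃ ∈ ℝ^{p×n}, and Q ∈ ℝ^{p×p}. Set λ := ‖F‖₂ and suppose ‖F̃ − F‖₂ ≤ η and ‖G̃ − G‖₂ ≤ μ with λ + η < 1, and let M ∈ ℝ satisfy (t−1)(λ+η)^{t−2} ≤ M for every integer t ≥ 2. Define g := (‖G‖₂ + μ) M η + μ. Then for every integer t ≥ 1: ‖(G̃ F̃^{t−1})^⊤ Q (G̃ F̃^{t−1}) − (G F^{t−1})^⊤ Q (G F^{t−1})‖₂ ≤ 2 g ‖Q‖₂ (‖G‖₂ + μ). -/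
open Matrix

/-- The spectral (operator 2-)norm of a real matrix. -/
noncomputable def sn {r c : ℕ} (A : Matrix (Fin r) (Fin c) ℝ) : ℝ :=
  ‖LinearMap.toContinuousLinearMap (Matrix.toEuclideanLin A)‖

open scoped Matrix.Norms.L2Operator

lemma sn_eq_norm {r c : ℕ} (A : Matrix (Fin r) (Fin c) ℝ) : sn A = ‖A‖ := rfl

lemma sn_transpose {r c : ℕ} (A : Matrix (Fin r) (Fin c) ℝ) : sn Aᵀ = sn A := by
  have h : Aᵀ = Aᴴ := by ext i j; simp [Matrix.conjTranspose_apply]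
  rw [sn_eq_norm, sn_eq_norm, h, Matrix.l2_opNorm_conjTranspose]

lemma sn_mul_le {a b c : ℕ} (A : Matrix (Fin a) (Fin b) ℝ) (B : Matrix (Fin b) (Fin c) ℝ) :
    sn (A * B) ≤ sn A * sn B := Matrix.l2_opNorm_mul A B

/-- power perturbation bound -/
lemma pow_pert {n : ℕ} (F Ftil : Matrix (Fin n) (Fin n) ℝ) (η : ℝ)
    (hFF : ‖Ftil - F‖ ≤ η) :
    ∀ k : ℕ, ‖Ftil ^ (k + 1) - F ^ (k + 1)‖ ≤ ((k : ℝ) + 1) * η * (‖F‖ + η) ^ k := by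
  have hη : 0 ≤ η := le_trans (norm_nonneg _) hFF
  have hFtil : ‖Ftil‖ ≤ ‖F‖ + η := by
    calc ‖Ftil‖ = ‖F + (Ftil - F)‖ := by congr 1; abel
    _ ≤ ‖F‖ + ‖Ftil - F‖ := norm_add_le _ _
    _ ≤ ‖F‖ + η := by linarith
  have hs : (0:ℝ) ≤ ‖F‖ + η := le_trans (norm_nonneg F) (by linarith)
  intro k
  induction k with
  | zero => simpa using hFF
  | succ k ih =>
    have hsplit : Ftil ^ (k + 2) - F ^ (k + 2)
        = (Ftil - F) * Ftil ^ (k + 1) + F * (Ftil ^ (k + 1) - F ^ (k + 1)) := by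
      rw [pow_succ' Ftil (k+1), pow_succ' F (k+1), Matrix.sub_mul, Matrix.mul_sub]
      abel
    have hpow : ‖Ftil ^ (k + 1)‖ ≤ (‖F‖ + η) ^ (k + 1) :=
      le_trans (norm_pow_le' Ftil (Nat.succ_pos k)) (pow_le_pow_left₀ (norm_nonneg _) hFtil _)
    calc ‖Ftil ^ (k + 2) - F ^ (k + 2)‖
        ≤ ‖(Ftil - F) * Ftil ^ (k + 1)‖ + ‖F * (Ftil ^ (k + 1) - F ^ (k + 1))‖ := by
          rw [hsplit]; exact norm_add_le _ _
      _ ≤ ‖Ftil - F‖ * ‖Ftil ^ (k + 1)‖ + ‖F‖ * ‖Ftil ^ (k + 1) - F ^ (k + 1)‖ := by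
          gcongr <;> exact norm_mul_le _ _
      _ ≤ η * (‖F‖ + η) ^ (k + 1) + (‖F‖ + η) * (((k : ℝ) + 1) * η * (‖F‖ + η) ^ k) := by
          gcongr <;> first
            | exact norm_nonneg _
            | linarith [norm_nonneg F]
            | positivity
            | assumption
      _ = ((k : ℝ) + 1 + 1) * η * (‖F‖ + η) ^ (k + 1) := by ring
      _ = (((k : ℕ) + 1 : ℕ) + 1 : ℝ) * η * (‖F‖ + η) ^ (k + 1) := by push_cast; ring

set_option maxHeartbeats 1000000 in
/-- output-cost perturbation bound `G_{i1}(ε)`: under the hypotheses of the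
output-trajectory bound, with `g = (‖G‖₂ + μ) M η + μ`, for every `t ≥ 1`,
`‖(G̃ F̃^{t−1})ᵀ Q (G̃ F̃^{t−1}) − (G F^{t−1})ᵀ Q (G F^{t−1})‖₂ ≤ 2 g ‖Q‖₂ (‖G‖₂ + μ)`. -/
theorem stmt12 {n p : ℕ} (hn : 0 < n) (hp : 0 < p)
    (F Ftil : Matrix (Fin n) (Fin n) ℝ)
    (G Gtil : Matrix (Fin p) (Fin n) ℝ)
    (Q : Matrix (Fin p) (Fin p) ℝ)
    (η μ : ℝ) (hη : 0 ≤ η) (hμ : 0 ≤ μ)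
    (hFF : sn (Ftil - F) ≤ η) (hGG : sn (Gtil - G) ≤ μ)
    (hlt : sn F + η < 1)
    (M : ℝ) (hM : ∀ t : ℕ, 2 ≤ t → ((t : ℝ) - 1) * (sn F + η) ^ (t - 2) ≤ M) :
    ∀ t : ℕ, 1 ≤ t →
      sn ((Gtil * Ftil ^ (t - 1))ᵀ * Q * (Gtil * Ftil ^ (t - 1))
          - (G * F ^ (t - 1))ᵀ * Q * (G * F ^ (t - 1)))
        ≤ 2 * ((sn G + μ) * M * η + μ) * sn Q * (sn G + μ) := by
  simp only [sn_eq_norm] at hFF hGG hlt hM ⊢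
  intro t ht
  obtain ⟨k, rfl⟩ : ∃ k, t = k + 1 := ⟨t - 1, (Nat.succ_pred_eq_of_pos ht).symm⟩
  simp only [Nat.add_sub_cancel]
  set lam : ℝ := ‖F‖ + η with hlam
  have hlamnn : (0:ℝ) ≤ lam := le_trans (norm_nonneg F) (by linarith)
  have hM1 : (1:ℝ) ≤ M := by
    have h := hM 2 le_rfl
    norm_num at h
    linarith
  have hGtil : ‖Gtil‖ ≤ ‖G‖ + μ := by
    calc ‖Gtil‖ = ‖G + (Gtil - G)‖ := by congr 1; abel
    _ ≤ ‖G‖ + ‖Gtil - G‖ := norm_add_le _ _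
    _ ≤ ‖G‖ + μ := by linarith
  set g : ℝ := (‖G‖ + μ) * M * η + μ with hg
  have hgnn : 0 ≤ g := by
    have : (0:ℝ) ≤ ‖G‖ + μ := le_trans (norm_nonneg G) (by linarith)
    have : (0:ℝ) ≤ (‖G‖ + μ) * M * η := by positivity
    linarith
  set A := Gtil * Ftil ^ k with hA
  set B := G * F ^ k with hB
  -- bounds on ‖A‖, ‖B‖, ‖A - B‖
  have hAle : ‖A‖ ≤ ‖G‖ + μ := by
    rcases Nat.eq_zero_or_pos k with rfl | hk
    · simpa [hA] using hGtil
    · have hpow : ‖Ftil ^ k‖ ≤ lam ^ k := by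
        refine le_trans (norm_pow_le' Ftil hk) (pow_le_pow_left₀ (norm_nonneg _) ?_ _)
        calc ‖Ftil‖ = ‖F + (Ftil - F)‖ := by congr 1; abel
        _ ≤ ‖F‖ + ‖Ftil - F‖ := norm_add_le _ _
        _ ≤ lam := by rw [hlam]; linarith
      have hpow1 : lam ^ k ≤ 1 := pow_le_one₀ hlamnn hlt.le
      calc ‖A‖ ≤ ‖Gtil‖ * ‖Ftil ^ k‖ := Matrix.l2_opNorm_mul _ _
      _ ≤ (‖G‖ + μ) * 1 := by
          refine mul_le_mul hGtil (le_trans hpow hpow1) (norm_nonneg _)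
            (le_trans (norm_nonneg G) (by linarith))
      _ = ‖G‖ + μ := mul_one _
  have hBle : ‖B‖ ≤ ‖G‖ + μ := by
    rcases Nat.eq_zero_or_pos k with rfl | hk
    · simp only [hB, pow_zero, Matrix.mul_one]; linarith [norm_nonneg G]
    · have hpow : ‖F ^ k‖ ≤ ‖F‖ ^ k := norm_pow_le' F hk
      have hpow1 : ‖F‖ ^ k ≤ 1 := pow_le_one₀ (norm_nonneg F) (by linarith)
      calc ‖B‖ ≤ ‖G‖ * ‖F ^ k‖ := Matrix.l2_opNorm_mul _ _
      _ ≤ ‖G‖ * 1 := by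
          exact mul_le_mul_of_nonneg_left (le_trans hpow hpow1) (norm_nonneg G)
      _ = ‖G‖ := mul_one _
      _ ≤ ‖G‖ + μ := by linarith
  have hABle : ‖A - B‖ ≤ g := by
    rcases Nat.eq_zero_or_pos k with rfl | hk
    · have : A - B = Gtil - G := by simp [hA, hB]
      rw [this]
      have : (0:ℝ) ≤ (‖G‖ + μ) * M * η := by
        have : (0:ℝ) ≤ ‖G‖ + μ := le_trans (norm_nonneg G) (by linarith)
        positivity
      rw [hg]; linarith
    · obtain ⟨j, rfl⟩ : ∃ j, k = j + 1 := ⟨k - 1, (Nat.succ_pred_eq_of_pos hk).symm⟩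
      have hsplit : A - B = Gtil * (Ftil ^ (j + 1) - F ^ (j + 1)) + (Gtil - G) * F ^ (j + 1) := by
        rw [hA, hB, Matrix.mul_sub, Matrix.sub_mul]
        abel
      have hpert : ‖Ftil ^ (j + 1) - F ^ (j + 1)‖ ≤ M * η := by
        have h1 := pow_pert F Ftil η hFF j
        have h2 := hM (j + 2) (by omega)
        have h2' : ((j : ℝ) + 1) * lam ^ j ≤ M := by
          have e : ((j + 2 : ℕ) : ℝ) - 1 = (j : ℝ) + 1 := by push_cast; ring
          rw [show j + 2 - 2 = j from rfl, e] at h2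
          exact h2
        calc ‖Ftil ^ (j + 1) - F ^ (j + 1)‖ ≤ ((j : ℝ) + 1) * η * lam ^ j := h1
        _ = (((j : ℝ) + 1) * lam ^ j) * η := by ring
        _ ≤ M * η := mul_le_mul_of_nonneg_right h2' hη
      have hFpow : ‖F ^ (j + 1)‖ ≤ 1 := by
        refine le_trans (norm_pow_le' F (Nat.succ_pos j)) ?_
        exact pow_le_one₀ (norm_nonneg F) (by linarith)
      calc ‖A - B‖ ≤ ‖Gtil * (Ftil ^ (j + 1) - F ^ (j + 1))‖ + ‖(Gtil - G) * F ^ (j + 1)‖ := by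
            rw [hsplit]; exact norm_add_le _ _
      _ ≤ ‖Gtil‖ * ‖Ftil ^ (j + 1) - F ^ (j + 1)‖ + ‖Gtil - G‖ * ‖F ^ (j + 1)‖ := by
            gcongr <;> exact Matrix.l2_opNorm_mul _ _
      _ ≤ (‖G‖ + μ) * (M * η) + μ * 1 := by
            gcongr <;> first
              | exact norm_nonneg _
              | linarith [norm_nonneg G]
              | positivity
              | assumption
      _ = g := by rw [hg]; ring
  -- split the main difference
  have hmain : Aᵀ * Q * A - Bᵀ * Q * B = Aᵀ * Q * (A - B) + (A - B)ᵀ * Q * B := by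
    rw [Matrix.transpose_sub, Matrix.mul_sub, Matrix.sub_mul, Matrix.sub_mul]
    abel
  have hAt : ‖Aᵀ‖ = ‖A‖ := by rw [← sn_eq_norm, ← sn_eq_norm, sn_transpose]
  have hABt : ‖(A - B)ᵀ‖ = ‖A - B‖ := by rw [← sn_eq_norm, ← sn_eq_norm, sn_transpose]
  calc ‖Aᵀ * Q * A - Bᵀ * Q * B‖
      ≤ ‖Aᵀ * Q * (A - B)‖ + ‖(A - B)ᵀ * Q * B‖ := by rw [hmain]; exact norm_add_le _ _
    _ ≤ ‖Aᵀ‖ * ‖Q‖ * ‖A - B‖ + ‖(A - B)ᵀ‖ * ‖Q‖ * ‖B‖ := by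
        gcongr
        · calc ‖Aᵀ * Q * (A - B)‖ ≤ ‖Aᵀ * Q‖ * ‖A - B‖ :=
              Matrix.l2_opNorm_mul (Aᵀ * Q) (A - B)
          _ ≤ ‖Aᵀ‖ * ‖Q‖ * ‖A - B‖ :=
              mul_le_mul_of_nonneg_right (Matrix.l2_opNorm_mul Aᵀ Q) (norm_nonneg _)
        · calc ‖(A - B)ᵀ * Q * B‖ ≤ ‖(A - B)ᵀ * Q‖ * ‖B‖ :=
              Matrix.l2_opNorm_mul ((A - B)ᵀ * Q) B
          _ ≤ ‖(A - B)ᵀ‖ * ‖Q‖ * ‖B‖ :=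
              mul_le_mul_of_nonneg_right (Matrix.l2_opNorm_mul (A - B)ᵀ Q) (norm_nonneg _)
    _ = ‖A‖ * ‖Q‖ * ‖A - B‖ + ‖A - B‖ * ‖Q‖ * ‖B‖ := by rw [hAt, hABt]
    _ ≤ (‖G‖ + μ) * ‖Q‖ * g + g * ‖Q‖ * (‖G‖ + μ) := by
        gcongr <;> first
          | exact norm_nonneg _
          | linarith [norm_nonneg G]
          | positivity
          | assumption
    _ = 2 * g * ‖Q‖ * (‖G‖ + μ) := by ring
end
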